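/- Fix constants L > 0, W > 0, R_S > 0 and reals α < 0 and μ < 0. For continuously differentiable u and continuous p, q on the closed rectangle D := [0,L] × [0,W], define the second variation of the pseudoenergy–momentum δ²H := (1/2) ∫_D ( |∇u|² + R_S⁻² u² ) dx dy − (1/2) R_S⁻² α ∫_D ( p² − (2/3) μ⁻¹ q² ) dx dy. Then δ²H ≥ 0, and δ²H = 0 if and only if u = 0, p = 0 and q = 0 everywhere on D (formal stability of the baroclinic zonal jet with α < 0 and μ < 0). -/

import Mathlib

/-- Partial derivative in `x` of a field of `(x, y)`. -/
noncomputable def pdx (f : ℝ → ℝ → ℝ) (x y : ℝ) : ℝ := deriv (fun x' => f x' y) x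

/-- Partial derivative in `y` of a field of `(x, y)`. -/
noncomputable def pdy (f : ℝ → ℝ → ℝ) (x y : ℝ) : ℝ := deriv (fun y' => f x y') y

open MeasureTheory Set intervalIntegral

/-- A continuous nonnegative function on `[a,b]` with zero integral vanishes. -/
lemma vanish_of_integral_zero {a b : ℝ} (hab : a < b) {h : ℝ → ℝ}
    (hc : ContinuousOn h (Set.Icc a b)) (hnn : ∀ x ∈ Set.Icc a b, 0 ≤ h x)
    (hz : (∫ x in a..b, h x) = 0) : ∀ x ∈ Set.Icc a b, h x = 0 := by
  by_contra hcon
  push_neg at hcon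
  obtain ⟨c, hc1, hc2⟩ := hcon
  have hpos : 0 < h c := lt_of_le_of_ne (hnn c hc1) (Ne.symm hc2)
  have := intervalIntegral.integral_pos hab hc (fun x hx => hnn x ⟨hx.1.le, hx.2⟩) ⟨c, hc1, hpos⟩
  linarith [hz ▸ this]

/-- A continuous nonnegative function on the plane whose iterated interval
integral over a rectangle vanishes, vanishes on the rectangle. -/
lemma vanish_of_double_integral_zero {L W : ℝ} (hL : 0 < L) (hW : 0 < W)
    {f : ℝ → ℝ → ℝ} (hf : Continuous (Function.uncurry f)) (hnn : ∀ x y, 0 ≤ f x y)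
    (hz : (∫ x in (0:ℝ)..L, ∫ y in (0:ℝ)..W, f x y) = 0) :
    ∀ x ∈ Set.Icc (0:ℝ) L, ∀ y ∈ Set.Icc (0:ℝ) W, f x y = 0 := by
  have hGc : Continuous fun x => ∫ y in (0:ℝ)..W, f x y :=
    intervalIntegral.continuous_parametric_intervalIntegral_of_continuous' hf 0 W
  have hGnn : ∀ x ∈ Set.Icc (0:ℝ) L, 0 ≤ ∫ y in (0:ℝ)..W, f x y := fun x _ =>
    intervalIntegral.integral_nonneg hW.le (fun y _ => hnn x y)
  have hG0 := vanish_of_integral_zero hL hGc.continuousOn hGnn hz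
  intro x hx y hy
  exact vanish_of_integral_zero hW (hf.comp (Continuous.prodMk_right x)).continuousOn
    (fun y _ => hnn x y) (hG0 x hx) y hy

lemma ae_ne_real (c : ℝ) : ∀ᵐ x : ℝ, x ≠ c := by
  rw [MeasureTheory.ae_iff]
  convert Real.volume_singleton (a := c) using 2
  ext x; simp

set_option maxHeartbeats 1000000 in
/-- Formal stability of the baroclinic zonal jet with `α < 0` and `μ < 0`: the
second variation of the pseudoenergy–momentum,
`δ²H = (1/2)∫∫(|∇u|² + R_S⁻²u²) − (1/2)R_S⁻²α∫∫(p² − (2/3)μ⁻¹q²)`,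
is nonnegative, and vanishes iff `u = p = q = 0` on `D = [0,L]×[0,W]`. -/
theorem formal_stability_second_variation
    (L W RS α μ : ℝ) (hL : 0 < L) (hW : 0 < W) (hRS : 0 < RS)
    (hα : α < 0) (hμ : μ < 0)
    (u p q : ℝ → ℝ → ℝ)
    (hu : ContDiffOn ℝ 1 (fun z : ℝ × ℝ => u z.1 z.2) (Set.Icc 0 L ×ˢ Set.Icc 0 W))
    (hp : ContinuousOn (fun z : ℝ × ℝ => p z.1 z.2) (Set.Icc 0 L ×ˢ Set.Icc 0 W))
    (hq : ContinuousOn (fun z : ℝ × ℝ => q z.1 z.2) (Set.Icc 0 L ×ˢ Set.Icc 0 W))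
    (d2H : ℝ)
    (hd2H : d2H = 1 / 2 * (∫ x in (0:ℝ)..L, ∫ y in (0:ℝ)..W,
        ((pdx u x y) ^ 2 + (pdy u x y) ^ 2 + (RS ^ 2)⁻¹ * (u x y) ^ 2))
      - 1 / 2 * (RS ^ 2)⁻¹ * α * ∫ x in (0:ℝ)..L, ∫ y in (0:ℝ)..W,
        ((p x y) ^ 2 - 2 / 3 * μ⁻¹ * (q x y) ^ 2)) :
    0 ≤ d2H ∧
      (d2H = 0 ↔ ∀ x ∈ Set.Icc (0:ℝ) L, ∀ y ∈ Set.Icc (0:ℝ) W,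
        u x y = 0 ∧ p x y = 0 ∧ q x y = 0) := by
  have hRS2 : (0:ℝ) < (RS ^ 2)⁻¹ := inv_pos.mpr (pow_pos hRS 2)
  have hμinv : μ⁻¹ < 0 := inv_lt_zero.mpr hμ
  set S : Set (ℝ × ℝ) := Set.Icc 0 L ×ˢ Set.Icc 0 W with hS
  set F : ℝ × ℝ → ℝ := fun z => u z.1 z.2 with hF
  have hUD : UniqueDiffOn ℝ S := (uniqueDiffOn_Icc hL).prod (uniqueDiffOn_Icc hW)
  -- clamping map
  set π : ℝ × ℝ → ℝ × ℝ := fun z => (max 0 (min z.1 L), max 0 (min z.2 W)) with hπdef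
  have hπc : Continuous π := by fun_prop
  have hπmem : ∀ z, π z ∈ S := by
    intro z
    constructor
    · exact ⟨le_max_left _ _, max_le (by linarith [hL]) (min_le_right _ _)⟩
    · exact ⟨le_max_left _ _, max_le (by linarith [hW]) (min_le_right _ _)⟩
  have hπid : ∀ z ∈ S, π z = z := by
    rintro ⟨x, y⟩ ⟨⟨hx1, hx2⟩, ⟨hy1, hy2⟩⟩
    simp only [hπdef, Prod.mk.injEq]
    exact ⟨by rw [min_eq_left hx2, max_eq_right hx1], by rw [min_eq_left hy2, max_eq_right hy1]⟩
  -- derivative fields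
  set D1 : ℝ × ℝ → ℝ := fun z => fderivWithin ℝ F S z (1, 0) with hD1
  set D2 : ℝ × ℝ → ℝ := fun z => fderivWithin ℝ F S z (0, 1) with hD2
  have hfc : ContinuousOn (fun z => fderivWithin ℝ F S z) S :=
    hu.continuousOn_fderivWithin hUD le_rfl
  set B : ℝ × ℝ → ℝ := fun z => D1 z ^ 2 + D2 z ^ 2 + (RS ^ 2)⁻¹ * F z ^ 2 with hB
  have hBc : ContinuousOn B S := by
    apply ContinuousOn.add
    apply ContinuousOn.add
    · exact (hfc.clm_apply continuousOn_const).pow 2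
    · exact (hfc.clm_apply continuousOn_const).pow 2
    · exact continuousOn_const.mul (hu.continuousOn.pow 2)
  set Bt : ℝ × ℝ → ℝ := fun z => B (π z) with hBt
  have hBtc : Continuous Bt := hBc.comp_continuous hπc hπmem
  set P : ℝ × ℝ → ℝ := fun z => p z.1 z.2 ^ 2 - 2 / 3 * μ⁻¹ * q z.1 z.2 ^ 2 with hP
  have hPc : ContinuousOn P S := ((hp.pow 2).sub (continuousOn_const.mul (hq.pow 2)))
  set Pt : ℝ × ℝ → ℝ := fun z => P (π z) with hPt
  have hPtc : Continuous Pt := hPc.comp_continuous hπc hπmem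
  -- interior identity for the slice derivatives
  have hint : interior S = Set.Ioo 0 L ×ˢ Set.Ioo 0 W := by
    rw [hS, interior_prod_eq, interior_Icc, interior_Icc]
  have hkey : ∀ x ∈ Set.Ioo (0:ℝ) L, ∀ y ∈ Set.Ioo (0:ℝ) W,
      pdx u x y = D1 (x, y) ∧ pdy u x y = D2 (x, y) := by
    intro x hx y hy
    have hzint : (x, y) ∈ interior S := by rw [hint]; exact ⟨hx, hy⟩
    have hnh : S ∈ nhds (x, y) := mem_interior_iff_mem_nhds.mp hzint
    have hdiff : DifferentiableAt ℝ F (x, y) := (hu.contDiffAt hnh).differentiableAt one_ne_zero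
    have hfw : fderivWithin ℝ F S (x, y) = fderiv ℝ F (x, y) := fderivWithin_of_mem_nhds hnh
    have hFd : HasFDerivAt F (fderiv ℝ F (x, y)) (x, y) := hdiff.hasFDerivAt
    constructor
    · have hγ : HasDerivAt (fun x' : ℝ => (x', y)) ((1 : ℝ), (0 : ℝ)) x :=
        (hasDerivAt_id x).prodMk (hasDerivAt_const x y)
      have := (hFd.comp_hasDerivAt x hγ).deriv
      simp only [pdx, hD1, hfw]
      exact this
    · have hγ : HasDerivAt (fun y' : ℝ => (x, y')) ((0 : ℝ), (1 : ℝ)) y :=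
        (hasDerivAt_const y x).prodMk (hasDerivAt_id y)
      have := (hFd.comp_hasDerivAt y hγ).deriv
      simp only [pdy, hD2, hfw]
      exact this
  -- rewrite the first iterated integral in terms of the continuous field `Bt`
  have hXeq : (∫ x in (0:ℝ)..L, ∫ y in (0:ℝ)..W,
        ((pdx u x y) ^ 2 + (pdy u x y) ^ 2 + (RS ^ 2)⁻¹ * (u x y) ^ 2))
      = ∫ x in (0:ℝ)..L, ∫ y in (0:ℝ)..W, Bt (x, y) := by
    apply intervalIntegral.integral_congr_ae
    filter_upwards [ae_ne_real L] with x hxne hxmem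
    rw [Set.uIoc_of_le hL.le] at hxmem
    have hxIoo : x ∈ Set.Ioo (0:ℝ) L := ⟨hxmem.1, lt_of_le_of_ne hxmem.2 hxne⟩
    apply intervalIntegral.integral_congr_ae
    filter_upwards [ae_ne_real W] with y hyne hymem
    rw [Set.uIoc_of_le hW.le] at hymem
    have hyIoo : y ∈ Set.Ioo (0:ℝ) W := ⟨hymem.1, lt_of_le_of_ne hymem.2 hyne⟩
    have hmemS : (x, y) ∈ S :=
      ⟨⟨hxIoo.1.le, hxIoo.2.le⟩, ⟨hyIoo.1.le, hyIoo.2.le⟩⟩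
    obtain ⟨h1, h2⟩ := hkey x hxIoo y hyIoo
    have hBtz : Bt (x, y) = B (x, y) := congrArg B (hπid _ hmemS)
    rw [hBtz, h1, h2, hB]
  -- rewrite the second iterated integral in terms of the continuous field `Pt`
  have hYeq : (∫ x in (0:ℝ)..L, ∫ y in (0:ℝ)..W,
        ((p x y) ^ 2 - 2 / 3 * μ⁻¹ * (q x y) ^ 2))
      = ∫ x in (0:ℝ)..L, ∫ y in (0:ℝ)..W, Pt (x, y) := by
    apply intervalIntegral.integral_congr
    intro x hxmem
    rw [Set.uIcc_of_le hL.le] at hxmem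
    apply intervalIntegral.integral_congr
    intro y hymem
    rw [Set.uIcc_of_le hW.le] at hymem
    have hmemS : (x, y) ∈ S := ⟨hxmem, hymem⟩
    have hPtz : Pt (x, y) = P (x, y) := congrArg P (hπid _ hmemS)
    show (p x y) ^ 2 - 2 / 3 * μ⁻¹ * (q x y) ^ 2 = Pt (x, y)
    rw [hPtz]
  set X : ℝ := ∫ x in (0:ℝ)..L, ∫ y in (0:ℝ)..W,
      ((pdx u x y) ^ 2 + (pdy u x y) ^ 2 + (RS ^ 2)⁻¹ * (u x y) ^ 2) with hXdef
  set Y : ℝ := ∫ x in (0:ℝ)..L, ∫ y in (0:ℝ)..W,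
      ((p x y) ^ 2 - 2 / 3 * μ⁻¹ * (q x y) ^ 2) with hYdef
  have hX0 : 0 ≤ X := by
    apply intervalIntegral.integral_nonneg hL.le
    intro x _
    apply intervalIntegral.integral_nonneg hW.le
    intro y _
    positivity
  have hY0 : 0 ≤ Y := by
    apply intervalIntegral.integral_nonneg hL.le
    intro x _
    apply intervalIntegral.integral_nonneg hW.le
    intro y _
    nlinarith [sq_nonneg (p x y), sq_nonneg (q x y)]
  constructor
  · nlinarith [mul_nonneg (mul_nonneg hRS2.le (neg_nonneg.mpr hα.le)) hY0]
  constructor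
  · -- d2H = 0 → fields vanish
    intro hzero
    set c : ℝ := 1 / 2 * (RS ^ 2)⁻¹ * (-α) with hc
    have hcpos : 0 < c := by
      rw [hc]; exact mul_pos (mul_pos (by norm_num) hRS2) (neg_pos.mpr hα)
    have hsum : 1 / 2 * X + c * Y = 0 := by rw [hd2H] at hzero; rw [hc]; linarith
    have hXz : X = 0 := by nlinarith [mul_nonneg hcpos.le hY0]
    have hYz : Y = 0 := by
      have hcY : c * Y = 0 := by linarith
      exact (mul_eq_zero.mp hcY).resolve_left (ne_of_gt hcpos)
    -- fields vanish pointwise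
    have hBz := vanish_of_double_integral_zero hL hW
      (f := fun x y => Bt (x, y)) hBtc
      (fun x y => by simp only [hBt, hB]; positivity)
      (by rw [← hXeq]; exact hXz)
    have hPz := vanish_of_double_integral_zero hL hW
      (f := fun x y => Pt (x, y)) hPtc
      (fun x y => by
        have hco : 2 / 3 * μ⁻¹ < 0 := mul_neg_of_pos_of_neg (by norm_num) hμinv
        simp only [hPt, hP]
        nlinarith [sq_nonneg (p (π (x, y)).1 (π (x, y)).2),
          mul_nonpos_of_nonpos_of_nonneg hco.le (sq_nonneg (q (π (x, y)).1 (π (x, y)).2))])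
      (by rw [← hYeq]; exact hYz)
    intro x hx y hy
    have hmemS : (x, y) ∈ S := ⟨hx, hy⟩
    -- u = 0
    have hBv := hBz x hx y hy
    simp only [hBt] at hBv
    rw [hπid _ hmemS] at hBv
    simp only [hB] at hBv
    have hu2 : F (x, y) ^ 2 = 0 := by
      nlinarith [sq_nonneg (D1 (x, y)), sq_nonneg (D2 (x, y)), sq_nonneg (F (x, y)),
        mul_nonneg hRS2.le (sq_nonneg (F (x, y)))]
    have hu0 : u x y = 0 := (pow_eq_zero_iff two_ne_zero).mp hu2
    -- p = q = 0
    have hPv := hPz x hx y hy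
    simp only [hPt] at hPv
    rw [hπid _ hmemS] at hPv
    simp only [hP] at hPv
    have hco : 2 / 3 * μ⁻¹ < 0 := mul_neg_of_pos_of_neg (by norm_num) hμinv
    have hterm : 2 / 3 * μ⁻¹ * q x y ^ 2 ≤ 0 :=
      mul_nonpos_of_nonpos_of_nonneg hco.le (sq_nonneg _)
    have hp2 : p x y ^ 2 = 0 := le_antisymm (by nlinarith) (sq_nonneg _)
    have hq2 : q x y ^ 2 = 0 := by
      have hqq : 2 / 3 * μ⁻¹ * q x y ^ 2 = 0 := by nlinarith
      exact (mul_eq_zero.mp hqq).resolve_left (ne_of_lt hco)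
    exact ⟨hu0, (pow_eq_zero_iff two_ne_zero).mp hp2,
      (pow_eq_zero_iff two_ne_zero).mp hq2⟩
  · -- fields vanish → d2H = 0
    intro h
    have hB0 : ∀ z ∈ S, B z = 0 := by
      intro z hz
      have hEq : Set.EqOn F (fun _ => (0:ℝ)) S := fun w hw => (h w.1 hw.1 w.2 hw.2).1
      have hfd : fderivWithin ℝ F S z = 0 := by
        rw [fderivWithin_congr hEq (hEq hz), fderivWithin_const_apply _]
      have hFz : F z = 0 := hEq hz
      simp [hB, hD1, hD2, hfd, hFz]
    have hBt0 : Bt = fun _ => (0:ℝ) := funext fun z => hB0 _ (hπmem z)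
    have hXz : X = 0 := by rw [hXeq]; simp [hBt0]
    have hYz : Y = 0 := by
      rw [hYdef]
      have houter : Set.EqOn (fun x => ∫ y in (0:ℝ)..W,
          ((p x y) ^ 2 - 2 / 3 * μ⁻¹ * (q x y) ^ 2)) (fun _ => (0:ℝ))
          (Set.uIcc (0:ℝ) L) := by
        intro x hx
        rw [Set.uIcc_of_le hL.le] at hx
        have hinner : Set.EqOn (fun y => (p x y) ^ 2 - 2 / 3 * μ⁻¹ * (q x y) ^ 2)
            (fun _ => (0:ℝ)) (Set.uIcc (0:ℝ) W) := by
          intro y hy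
          rw [Set.uIcc_of_le hW.le] at hy
          obtain ⟨_, hp0, hq0⟩ := h x hx y hy
          simp [hp0, hq0]
        simp only
        rw [intervalIntegral.integral_congr hinner]
        simp
      rw [intervalIntegral.integral_congr houter]
      simp
    rw [hd2H, hXz, hYz]
    ring
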